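/- arXiv:2604.05123 — 8 statements merged into one kernel-verified Lean document; each statement's English description precedes it below -/
import Mathlib

section
/- Let G be a tdlc group (a Hausdorff, locally compact, totally disconnected topological group), let L be a closed subgroup of G, and let L1 be an open subgroup of L of finite index in L. Then the discrete residual of L1 equals the discrete residual of L, i.e. the intersection of all open normal subgroups of L1 coincides with the intersection of all open normal subgroups of L. -/
/-- A subgroup `O` of `G` is relatively open in the subgroup `L`, i.e. open for the
subspace topology of `L`. -/
def relOpenIn {G : Type*} [Group G] [TopologicalSpace G] (L O : Subgroup G) : Prop :=
  ∃ V : Set G, IsOpen V ∧ (O : Set G) = V ∩ (L : Set G)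

/-- The discrete residual of a subgroup `L` of `G`: the intersection of all subgroups of `L`
that are open in `L` (for the subspace topology) and normal in `L`. -/
def residualIn {G : Type*} [Group G] [TopologicalSpace G] (L : Subgroup G) : Set G :=
  ⋂ O ∈ {O : Subgroup G | O ≤ L ∧ relOpenIn L O ∧ ∀ g ∈ L, ∀ x ∈ O, g * x * g⁻¹ ∈ O},
    (O : Set G)

theorem stmt0 {G : Type*} [Group G] [TopologicalSpace G] [IsTopologicalGroup G]
    [T2Space G] [LocallyCompactSpace G] [TotallyDisconnectedSpace G]
    (L L1 : Subgroup G) (hLclosed : IsClosed (L : Set G))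
    (hle : L1 ≤ L) (hopen : relOpenIn L L1) (hfi : L1.relIndex L ≠ 0) :
    residualIn L1 = residualIn L := by
  have hmem : ∀ (M : Subgroup G) (x : G), x ∈ residualIn M ↔
      ∀ O : Subgroup G, O ≤ M → relOpenIn M O →
        (∀ g ∈ M, ∀ y ∈ O, g * y * g⁻¹ ∈ O) → x ∈ O := by
    intro M x
    simp only [residualIn, Set.mem_iInter, Set.mem_setOf_eq, SetLike.mem_coe, and_imp]
  apply Set.Subset.antisymm
  · -- residualIn L1 ⊆ residualIn L
    intro x hx
    rw [hmem] at hx ⊢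
    intro O hOle hOopen hOnorm
    have h1 : (O ⊓ L1 : Subgroup G) ≤ L1 := inf_le_right
    have h2 : relOpenIn L1 (O ⊓ L1) := by
      obtain ⟨V, hV, hVeq⟩ := hOopen
      refine ⟨V, hV, ?_⟩
      rw [Subgroup.coe_inf, hVeq]
      ext y
      simp only [Set.mem_inter_iff, SetLike.mem_coe]
      exact ⟨fun ⟨⟨h1, h2⟩, h3⟩ => ⟨h1, h3⟩, fun ⟨h1, h3⟩ => ⟨⟨h1, hle h3⟩, h3⟩⟩
    have h3 : ∀ g ∈ L1, ∀ y ∈ (O ⊓ L1 : Subgroup G), g * y * g⁻¹ ∈ O ⊓ L1 := by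
      intro g hg y hy
      have hy' := Subgroup.mem_inf.mp hy
      exact Subgroup.mem_inf.mpr ⟨hOnorm g (hle hg) y hy'.1, mul_mem (mul_mem hg hy'.2) (inv_mem hg)⟩
    exact (Subgroup.mem_inf.mp (hx _ h1 h2 h3)).1
  · -- residualIn L ⊆ residualIn L1
    intro x hx
    rw [hmem] at hx ⊢
    intro O hOle hOopen hOnorm
    haveI : Finite (L ⧸ L1.subgroupOf L) := by
      apply Nat.finite_of_card_ne_zero
      rwa [Subgroup.relIndex, Subgroup.index] at hfi
    obtain ⟨V0, hV0, hV0eq⟩ := hOopen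
    obtain ⟨W, hW, hWeq⟩ := hopen
    have hV1 : IsOpen (V0 ∩ W) := hV0.inter hW
    have hOeq : (O : Set G) = (V0 ∩ W) ∩ L := by
      rw [hV0eq, hWeq]
      ext y
      simp only [Set.mem_inter_iff]
      tauto
    set N : Subgroup G := ⨅ g : L, O.map (MulAut.conj (g : G)).toMonoidHom with hNdef
    have hmemN : ∀ y, y ∈ N ↔
        ∀ g : L, ∃ z ∈ O, (g : G) * z * (g : G)⁻¹ = y := by
      intro y
      simp only [hNdef, Subgroup.mem_iInf, Subgroup.mem_map, MulEquiv.coe_toMonoidHom,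
        MulAut.conj_apply]
    have hNO : N ≤ O := by
      intro y hy
      obtain ⟨z, hz, hzeq⟩ := (hmemN y).1 hy 1
      simp only [OneMemClass.coe_one, one_mul, inv_one, mul_one] at hzeq
      rwa [← hzeq]
    have hNL : N ≤ L := le_trans hNO (le_trans hOle hle)
    have hNnorm : ∀ g ∈ L, ∀ y ∈ N, g * y * g⁻¹ ∈ N := by
      intro g hg y hy
      rw [hmemN] at hy ⊢
      intro h
      obtain ⟨z, hz, hzeq⟩ := hy ((⟨g, hg⟩ : L)⁻¹ * h)
      refine ⟨z, hz, ?_⟩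
      simp only [Subgroup.coe_mul, InvMemClass.coe_inv] at hzeq
      rw [← hzeq]
      group
    -- openness of each conjugate
    have hCopen : ∀ g : L, ∃ Vg : Set G, IsOpen Vg ∧
        ((O.map (MulAut.conj (g : G)).toMonoidHom : Subgroup G) : Set G) = Vg ∩ L := by
      intro g
      refine ⟨(fun x => (g : G) * x * (g : G)⁻¹) '' (V0 ∩ W), ?_, ?_⟩
      · exact ((Homeomorph.mulLeft (g : G)).trans
          (Homeomorph.mulRight (g : G)⁻¹)).isOpenMap _ hV1
      · ext y
        simp only [Subgroup.coe_map, MulEquiv.coe_toMonoidHom, MulAut.conj_apply,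
          Set.mem_image, Set.mem_inter_iff, SetLike.mem_coe]
        constructor
        · rintro ⟨z, hz, rfl⟩
          have hzset : z ∈ (V0 ∩ W) ∩ (L : Set G) := by rw [← hOeq]; exact hz
          exact ⟨⟨z, hzset.1, rfl⟩, mul_mem (mul_mem g.2 hzset.2) (inv_mem g.2)⟩
        · rintro ⟨⟨v, hv, rfl⟩, hyL⟩
          have hvL : v ∈ L := by
            have : (g : G)⁻¹ * ((g : G) * v * (g : G)⁻¹) * (g : G) ∈ L :=
              mul_mem (mul_mem (inv_mem g.2) hyL) g.2
            simpa [mul_assoc] using this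
          have hvO : v ∈ O := by
            rw [← SetLike.mem_coe, hOeq]
            exact ⟨hv, hvL⟩
          exact ⟨v, hvO, rfl⟩
    -- conjugates only depend on the coset mod L1
    have key : ∀ a b : L, ((a : G)⁻¹ * b ∈ L1) →
        O.map (MulAut.conj (a : G)).toMonoidHom ≤ O.map (MulAut.conj (b : G)).toMonoidHom := by
      intro a b hk y hy
      rw [Subgroup.mem_map] at hy ⊢
      obtain ⟨z, hz, hzeq⟩ := hy
      refine ⟨((a : G)⁻¹ * b)⁻¹ * z * (((a : G)⁻¹ * b)⁻¹)⁻¹,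
        hOnorm _ (inv_mem hk) z hz, ?_⟩
      simp only [MulEquiv.coe_toMonoidHom, MulAut.conj_apply] at hzeq ⊢
      rw [← hzeq]
      group
    have keyEq : ∀ a b : L, (QuotientGroup.leftRel (L1.subgroupOf L)) a b →
        ((O.map (MulAut.conj (a : G)).toMonoidHom : Subgroup G) : Set G) =
        ((O.map (MulAut.conj (b : G)).toMonoidHom : Subgroup G) : Set G) := by
      intro a b hab
      have h1 : (a⁻¹ * b : L) ∈ L1.subgroupOf L := QuotientGroup.leftRel_apply.mp hab
      have h1' : (a : G)⁻¹ * b ∈ L1 := by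
        have := (Subgroup.mem_subgroupOf).mp h1
        simpa using this
      have h2' : (b : G)⁻¹ * a ∈ L1 := by
        have := inv_mem h1'
        simpa [mul_inv_rev] using this
      exact congrArg _ (le_antisymm (key a b h1') (key b a h2'))
    set F : L ⧸ L1.subgroupOf L → Set G :=
      Quotient.lift (fun g : L => ((O.map (MulAut.conj (g : G)).toMonoidHom : Subgroup G) : Set G))
        keyEq with hFdef
    have hNset : (N : Set G) = ⋂ q : L ⧸ L1.subgroupOf L, F q := by
      rw [hNdef, Subgroup.coe_iInf]
      exact (Quotient.mk''_surjective.iInter_comp F)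
    have hchoice : ∀ q : L ⧸ L1.subgroupOf L, ∃ Vq : Set G, IsOpen Vq ∧ F q = Vq ∩ L := by
      intro q
      induction q using Quotient.inductionOn with
      | h g => exact hCopen g
    choose Vf hVopen hVeq using hchoice
    have hNopen : relOpenIn L N := by
      refine ⟨⋂ q, Vf q, isOpen_iInter_of_finite hVopen, ?_⟩
      rw [hNset]
      have : ∀ q, F q = Vf q ∩ L := hVeq
      calc (⋂ q, F q) = ⋂ q, (Vf q ∩ L) := by simp only [hVeq]
        _ = (⋂ q, Vf q) ∩ L := (Set.iInter_inter _ _).symm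
    exact hNO (hx N hNL hNopen hNnorm)
end

section
/- Let G be a tdlc group (a Hausdorff, locally compact, totally disconnected topological group) and L a closed subgroup of G. Then every element g of G that commensurates L (i.e. such that gLg⁻¹ and L are commensurable) normalizes the discrete residual Res(L): g Res(L) g⁻¹ = Res(L). -/
/-- The conjugate `g A g⁻¹` of a subgroup. -/
def conjSubgroup {G : Type*} [Group G] (g : G) (A : Subgroup G) : Subgroup G :=
  A.map (MulAut.conj g).toMonoidHom

section lemmas
open Pointwise
variable {G : Type*} [Group G]

lemma mem_conjSubgroup {g x : G} {A : Subgroup G} :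
    x ∈ conjSubgroup g A ↔ g⁻¹ * x * g ∈ A := by
  constructor
  · rintro ⟨a, ha, rfl⟩
    simpa [MulAut.conj, mul_assoc] using ha
  · intro h
    exact ⟨g⁻¹ * x * g, h, by simp [MulAut.conj]; group⟩

lemma coe_conjSubgroup (g : G) (A : Subgroup G) :
    (conjSubgroup g A : Set G) = (fun x => g * x * g⁻¹) '' (A : Set G) := rfl

lemma conjSubgroup_conjSubgroup (g h : G) (A : Subgroup G) :
    conjSubgroup g (conjSubgroup h A) = conjSubgroup (g * h) A := by
  ext x
  simp only [mem_conjSubgroup]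
  constructor <;> intro hx
  · have : h⁻¹ * (g⁻¹ * x * g) * h = (g*h)⁻¹ * x * (g*h) := by group
    rwa [this] at hx
  · have : h⁻¹ * (g⁻¹ * x * g) * h = (g*h)⁻¹ * x * (g*h) := by group
    rw [this]; exact hx

lemma conjSubgroup_one (A : Subgroup G) : conjSubgroup 1 A = A := by
  ext x; simp [mem_conjSubgroup]

lemma conjSubgroup_inv_conjSubgroup (g : G) (A : Subgroup G) :
    conjSubgroup g⁻¹ (conjSubgroup g A) = A := by
  rw [conjSubgroup_conjSubgroup, inv_mul_cancel, conjSubgroup_one]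

lemma conjSubgroup_mono (g : G) {A B : Subgroup G} (h : A ≤ B) :
    conjSubgroup g A ≤ conjSubgroup g B := by
  intro x hx; rw [mem_conjSubgroup] at *; exact h hx

lemma conjSubgroup_self {g : G} {L : Subgroup G} (hg : g ∈ L) :
    conjSubgroup g L = L := by
  ext x; rw [mem_conjSubgroup]
  constructor
  · intro h
    have := L.mul_mem (L.mul_mem hg h) (L.inv_mem hg)
    convert this using 1; group
  · intro h
    exact L.mul_mem (L.mul_mem (L.inv_mem hg) h) hg

variable [TopologicalSpace G]

lemma mem_residualIn {L : Subgroup G} {x : G} :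
    x ∈ residualIn L ↔ ∀ O : Subgroup G, O ≤ L → relOpenIn L O →
      (∀ g ∈ L, ∀ y ∈ O, g * y * g⁻¹ ∈ O) → x ∈ O := by
  simp only [residualIn, Set.mem_iInter, Set.mem_setOf_eq, SetLike.mem_coe]
  exact ⟨fun h O h1 h2 h3 => h O ⟨h1, h2, h3⟩, fun h O ⟨h1, h2, h3⟩ => h O h1 h2 h3⟩

lemma relOpenIn_inf {L O₁ O₂ : Subgroup G} (h1 : relOpenIn L O₁) (h2 : relOpenIn L O₂) :
    relOpenIn L (O₁ ⊓ O₂) := by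
  obtain ⟨V1, hV1, hO1⟩ := h1
  obtain ⟨V2, hV2, hO2⟩ := h2
  refine ⟨V1 ∩ V2, hV1.inter hV2, ?_⟩
  rw [Subgroup.coe_inf, hO1, hO2]
  ext x; simp only [Set.mem_inter_iff]; tauto

lemma relOpenIn_trans {L K O : Subgroup G} (h1 : relOpenIn K O) (h2 : relOpenIn L K) :
    relOpenIn L O := by
  obtain ⟨V, hV, hO⟩ := h1
  obtain ⟨W, hW, hK⟩ := h2
  exact ⟨V ∩ W, hV.inter hW, by rw [hO, hK]; ext x; simp only [Set.mem_inter_iff]; tauto⟩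

lemma relOpenIn_finsetInf {L : Subgroup G} (s : Finset (Subgroup G)) (hne : s.Nonempty)
    (h : ∀ O ∈ s, relOpenIn L O) : relOpenIn L (s.inf id) := by
  induction hne using Finset.Nonempty.cons_induction with
  | singleton a => simpa using h a (by simp)
  | cons a s ha hs ih =>
      rw [Finset.inf_cons]
      exact relOpenIn_inf (h a (by simp)) (ih (fun O hO => h O (by simp [hO])))

lemma residual_mono {K L : Subgroup G} (hKL : K ≤ L) : residualIn K ⊆ residualIn L := by
  intro x hx
  rw [mem_residualIn] at hx ⊢
  intro O hOL ⟨V, hV, hOV⟩ hnorm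
  have h1 : O ⊓ K ≤ K := inf_le_right
  have h2 : relOpenIn K (O ⊓ K) := by
    refine ⟨V, hV, ?_⟩
    rw [Subgroup.coe_inf, hOV]
    ext y
    simp only [Set.mem_inter_iff, SetLike.mem_coe]
    exact ⟨fun ⟨⟨a, _⟩, c⟩ => ⟨a, c⟩, fun ⟨a, c⟩ => ⟨⟨a, hKL c⟩, c⟩⟩
  have h3 : ∀ g ∈ K, ∀ y ∈ O ⊓ K, g * y * g⁻¹ ∈ O ⊓ K := by
    intro g hg y hy
    exact ⟨hnorm g (hKL hg) y hy.1, K.mul_mem (K.mul_mem hg hy.2) (K.inv_mem hg)⟩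
  exact (hx _ h1 h2 h3).1

variable [IsTopologicalGroup G]

lemma relOpenIn_conj (g : G) {L O : Subgroup G} (h : relOpenIn L O) :
    relOpenIn (conjSubgroup g L) (conjSubgroup g O) := by
  obtain ⟨V, hV, hO⟩ := h
  refine ⟨(fun x => g * x * g⁻¹) '' V, ?_, ?_⟩
  · have : (fun x => g * x * g⁻¹) '' V = (fun x => g⁻¹ * x * g) ⁻¹' V := by
      ext x
      simp only [Set.mem_image, Set.mem_preimage]
      constructor
      · rintro ⟨v, hv, rfl⟩; convert hv using 1; group
      · intro hx; exact ⟨g⁻¹ * x * g, hx, by group⟩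
    rw [this]
    exact hV.preimage (by fun_prop)
  · rw [coe_conjSubgroup, coe_conjSubgroup, hO,
      Set.image_inter (fun a b hab => by
        have : g⁻¹ * (g * a * g⁻¹) * g = g⁻¹ * (g * b * g⁻¹) * g := by rw [hab]
        simpa [mul_assoc] using this)]

lemma residual_antitone {K L : Subgroup G} (hKL : K ≤ L) (hopen : relOpenIn L K)
    (hfin : K.relIndex L ≠ 0) : residualIn L ⊆ residualIn K := by
  intro x hx
  rw [mem_residualIn] at hx ⊢
  intro O hOK hOopen hOnorm
  have hKconj : ∀ k ∈ K, conjSubgroup k O = O := by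
    intro k hk
    ext y
    rw [mem_conjSubgroup]
    constructor
    · intro h
      have := hOnorm k hk _ h
      convert this using 1; group
    · intro h
      have : k⁻¹ * y * (k⁻¹)⁻¹ ∈ O := hOnorm k⁻¹ (K.inv_mem hk) y h
      simpa using this
  set f : L → Subgroup G := fun y => conjSubgroup (y : G) O with hf
  set N : Subgroup G := ⨅ y : L, f y with hN
  have hNO : N ≤ O := by
    intro y hy
    have := Subgroup.mem_iInf.mp hy 1
    simp only [hf] at this
    rwa [Subgroup.coe_one, conjSubgroup_one] at this
  have hNL : N ≤ L := hNO.trans (hOK.trans hKL)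
  have hNnorm : ∀ g ∈ L, ∀ y ∈ N, g * y * g⁻¹ ∈ N := by
    intro g hg y hy
    rw [Subgroup.mem_iInf]
    intro z
    simp only [hf, mem_conjSubgroup]
    have := Subgroup.mem_iInf.mp hy ⟨g⁻¹ * z, L.mul_mem (L.inv_mem hg) z.2⟩
    simp only [hf, mem_conjSubgroup] at this
    convert this using 1
    group
  have hQfin : Finite (L ⧸ K.subgroupOf L) :=
    Nat.finite_of_card_ne_zero (by rwa [← Subgroup.index_eq_card])
  have hconst : ∀ a b : L, (QuotientGroup.mk a : L ⧸ K.subgroupOf L) = QuotientGroup.mk b →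
      f a = f b := by
    intro a b hab
    rw [QuotientGroup.eq] at hab
    have hk : ((a : G)⁻¹ * b) ∈ K := hab
    have : f b = conjSubgroup (a : G) (conjSubgroup ((a : G)⁻¹ * (b : G)) O) := by
      rw [conjSubgroup_conjSubgroup]
      simp [hf]
    rw [this, hKconj _ hk]
  have hrange : Set.Finite (Set.range f) := by
    have : Set.range f ⊆ Set.range (fun q : L ⧸ K.subgroupOf L =>
        Quotient.liftOn' q f (fun a b hab => hconst a b (Quotient.sound' hab))) := by
      rintro S ⟨y, rfl⟩
      exact ⟨QuotientGroup.mk y, rfl⟩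
    exact (Set.finite_range _).subset this
  have hrone : relOpenIn L O := relOpenIn_trans hOopen hopen
  have hropen : ∀ y : L, relOpenIn L (f y) := by
    intro y
    have := relOpenIn_conj (y : G) hrone
    rwa [conjSubgroup_self y.2] at this
  have hsne : (hrange.toFinset).Nonempty := ⟨f 1, by simp⟩
  have hNinf : N = (hrange.toFinset).inf id := by
    rw [Finset.inf_id_eq_sInf, Set.Finite.coe_toFinset, hN, iInf, sInf_range]
  have hNopen : relOpenIn L N := by
    rw [hNinf]
    exact relOpenIn_finsetInf _ hsne (fun S hS => by
      obtain ⟨y, rfl⟩ := (Set.Finite.mem_toFinset hrange).mp hS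
      exact hropen y)
  exact hNO (hx N hNL hNopen hNnorm)

lemma residual_conj_subset (g : G) (L : Subgroup G) :
    (fun x => g * x * g⁻¹) '' residualIn L ⊆ residualIn (conjSubgroup g L) := by
  rintro _ ⟨y, hy, rfl⟩
  rw [mem_residualIn] at hy ⊢
  intro O' hO' hO'open hO'norm
  set O : Subgroup G := conjSubgroup g⁻¹ O' with hO
  have hOL : O ≤ L := by
    have := conjSubgroup_mono g⁻¹ hO'
    rwa [conjSubgroup_inv_conjSubgroup] at this
  have hOopen : relOpenIn L O := by
    have := relOpenIn_conj g⁻¹ hO'open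
    rwa [conjSubgroup_inv_conjSubgroup] at this
  have hOnorm : ∀ h ∈ L, ∀ z ∈ O, h * z * h⁻¹ ∈ O := by
    intro h hh z hz
    simp only [hO, mem_conjSubgroup, inv_inv] at hz ⊢
    have hmem : g * h * g⁻¹ ∈ conjSubgroup g L := by
      rw [mem_conjSubgroup]
      convert hh using 1; group
    have := hO'norm _ hmem _ hz
    convert this using 1
    group
  have hyO : y ∈ O := hy O hOL hOopen hOnorm
  simp only [hO, mem_conjSubgroup, inv_inv] at hyO
  exact hyO

lemma residual_conj_eq (g : G) (L : Subgroup G) :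
    (fun x => g * x * g⁻¹) '' residualIn L = residualIn (conjSubgroup g L) := by
  apply Set.Subset.antisymm (residual_conj_subset g L)
  intro x hx
  have h2 := residual_conj_subset g⁻¹ (conjSubgroup g L)
  rw [conjSubgroup_inv_conjSubgroup] at h2
  have : g⁻¹ * x * g⁻¹⁻¹ ∈ residualIn L := h2 ⟨x, hx, rfl⟩
  refine ⟨g⁻¹ * x * g⁻¹⁻¹, this, by group⟩

lemma relOpenIn_of_isClosed {K L : Subgroup G} (hKL : K ≤ L)
    (hcl : IsClosed (K : Set G)) (hfin : K.relIndex L ≠ 0) : relOpenIn L K := by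
  set c : L → Set G := fun y => (y : G) • (K : Set G) with hc
  have hQfin : Finite (L ⧸ K.subgroupOf L) :=
    Nat.finite_of_card_ne_zero (by rwa [← Subgroup.index_eq_card])
  have hconst : ∀ a b : L, (QuotientGroup.mk a : L ⧸ K.subgroupOf L) = QuotientGroup.mk b →
      c a = c b := by
    intro a b hab
    rw [QuotientGroup.eq] at hab
    have hk : ((a : G)⁻¹ * b) ∈ K := hab
    ext z
    simp only [hc, Set.mem_smul_set_iff_inv_smul_mem, smul_eq_mul, SetLike.mem_coe]
    constructor
    · intro h
      have := K.mul_mem (K.inv_mem hk) h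
      convert this using 1; group
    · intro h
      have := K.mul_mem hk h
      convert this using 1; group
  have hrange : Set.Finite (Set.range c) := by
    have : Set.range c ⊆ Set.range (fun q : L ⧸ K.subgroupOf L =>
        Quotient.liftOn' q c (fun a b hab => hconst a b (Quotient.sound' hab))) := by
      rintro S ⟨y, rfl⟩
      exact ⟨QuotientGroup.mk y, rfl⟩
    exact (Set.finite_range _).subset this
  set Bad : Set G := ⋃ S ∈ (Set.range c \ {(K : Set G)}), S with hBad
  have hBadClosed : IsClosed Bad := by
    refine Set.Finite.isClosed_biUnion (hrange.subset Set.diff_subset) ?_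
    rintro S ⟨⟨y, rfl⟩, -⟩
    exact hcl.smul ((y : L) : G)
  refine ⟨Badᶜ, hBadClosed.isOpen_compl, ?_⟩
  ext z
  simp only [Set.mem_inter_iff, Set.mem_compl_iff, SetLike.mem_coe]
  constructor
  · intro hz
    refine ⟨?_, hKL hz⟩
    intro hbad
    simp only [hBad, Set.mem_iUnion] at hbad
    obtain ⟨S, ⟨⟨y, rfl⟩, hSne⟩, hzS⟩ := hbad
    apply hSne
    simp only [hc] at hzS ⊢
    rw [Set.mem_smul_set_iff_inv_smul_mem, smul_eq_mul, SetLike.mem_coe] at hzS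
    have hyK : (y : G) ∈ K := by
      have := K.mul_mem hzS (K.inv_mem hz)
      have h2 := K.inv_mem this
      convert h2 using 1; group
    rw [Set.mem_singleton_iff]
    ext w
    rw [Set.mem_smul_set_iff_inv_smul_mem, smul_eq_mul, SetLike.mem_coe, SetLike.mem_coe]
    constructor
    · intro h
      have := K.mul_mem hyK h
      convert this using 1; group
    · intro h
      exact K.mul_mem (K.inv_mem hyK) h
  · rintro ⟨hnb, hzL⟩
    by_contra hzK
    apply hnb
    simp only [hBad, Set.mem_iUnion]
    refine ⟨c ⟨z, hzL⟩, ⟨⟨⟨z, hzL⟩, rfl⟩, ?_⟩, ?_⟩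
    · intro hcK
      apply hzK
      have : z ∈ c ⟨z, hzL⟩ := by
        simp only [hc]
        rw [Set.mem_smul_set_iff_inv_smul_mem, smul_eq_mul]
        simpa using K.one_mem
      rw [hcK] at this
      exact this
    · simp only [hc]
      rw [Set.mem_smul_set_iff_inv_smul_mem, smul_eq_mul]
      simpa using K.one_mem

end lemmas

theorem stmt1 {G : Type*} [Group G] [TopologicalSpace G] [IsTopologicalGroup G]
    [T2Space G] [LocallyCompactSpace G] [TotallyDisconnectedSpace G]
    (L : Subgroup G) (hLclosed : IsClosed (L : Set G)) (g : G)
    (hg : Subgroup.Commensurable (conjSubgroup g L) L) :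
    (fun x => g * x * g⁻¹) '' residualIn L = residualIn L := by
  set M : Subgroup G := conjSubgroup g L with hM
  set K : Subgroup G := M ⊓ L with hK
  have hMclosed : IsClosed (M : Set G) := by
    have : (M : Set G) = (fun x => g⁻¹ * x * g) ⁻¹' (L : Set G) := by
      ext z
      simp [hM, SetLike.mem_coe, mem_conjSubgroup]
    rw [this]
    exact hLclosed.preimage (by fun_prop)
  have hKclosed : IsClosed (K : Set G) := by
    rw [hK, Subgroup.coe_inf]
    exact hMclosed.inter hLclosed
  have hfinL : K.relIndex L ≠ 0 := by
    rw [hK, Subgroup.inf_relIndex_right]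
    exact hg.1
  have hfinM : K.relIndex M ≠ 0 := by
    rw [hK, Subgroup.inf_relIndex_left]
    exact hg.2
  have hopenL : relOpenIn L K := relOpenIn_of_isClosed inf_le_right hKclosed hfinL
  have hopenM : relOpenIn M K := relOpenIn_of_isClosed inf_le_left hKclosed hfinM
  have hresL : residualIn L = residualIn K :=
    Set.Subset.antisymm (residual_antitone inf_le_right hopenL hfinL)
      (residual_mono inf_le_right)
  have hresM : residualIn M = residualIn K :=
    Set.Subset.antisymm (residual_antitone inf_le_left hopenM hfinM)
      (residual_mono inf_le_left)
  rw [residual_conj_eq g L, ← hM, hresM, hresL]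
end

section
/- Let G be a tdlc group (a Hausdorff, locally compact, totally disconnected topological group) and L a closed cocompact subgroup of G (i.e. the quotient space G/L is compact). If G admits a compact open subgroup U whose normal core in G is trivial, then L admits a compact open subgroup (for the subspace topology) whose normal core in L is trivial. -/
theorem stmt2 {G : Type*} [Group G] [TopologicalSpace G] [IsTopologicalGroup G]
    [T2Space G] [LocallyCompactSpace G] [TotallyDisconnectedSpace G]
    (L : Subgroup G) (hLclosed : IsClosed (L : Set G)) (hcoc : CompactSpace (G ⧸ L))
    (U : Subgroup G) (hUcompact : IsCompact (U : Set G)) (hUopen : IsOpen (U : Set G))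
    (hUcore : U.normalCore = ⊥) :
    ∃ V : Subgroup G, V ≤ L ∧ IsCompact (V : Set G) ∧ relOpenIn L V ∧
      (V.subgroupOf L).normalCore = ⊥ := by
  -- Step 1: find a compact set `C` containing `1` with `G = C * L`.
  have hcover : (Set.univ : Set (G ⧸ L)) ⊆
      ⋃ g : G, (QuotientGroup.mk : G → G ⧸ L) '' ((g * ·) '' (U : Set G)) := by
    intro q _
    obtain ⟨g, rfl⟩ := QuotientGroup.mk_surjective q
    exact Set.mem_iUnion.2 ⟨g, ⟨g, ⟨1, one_mem U, by simp⟩, rfl⟩⟩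
  obtain ⟨t, ht⟩ := isCompact_univ.elim_finite_subcover
    (fun g : G => (QuotientGroup.mk : G → G ⧸ L) '' ((g * ·) '' (U : Set G)))
    (fun g => QuotientGroup.isOpenMap_coe _ ((Homeomorph.mulLeft g).isOpenMap _ hUopen))
    hcover
  set C : Set G := {1} ∪ ⋃ g ∈ t, (g * ·) '' (U : Set G) with hC
  have hCcompact : IsCompact C := by
    refine isCompact_singleton.union ?_
    exact t.isCompact_biUnion fun g _ => hUcompact.image (continuous_mul_left g)
  have h1C : (1 : G) ∈ C := Set.mem_union_left _ rfl
  have hCL : ∀ g : G, ∃ c ∈ C, ∃ l ∈ L, g = c * l := by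
    intro g
    have := ht (Set.mem_univ (QuotientGroup.mk g : G ⧸ L))
    rw [Set.mem_iUnion₂] at this
    obtain ⟨f, hf, x, ⟨u, hu, rfl⟩, hx⟩ := this
    simp only at hx
    have hl : (f * u)⁻¹ * g ∈ L := QuotientGroup.eq.mp hx
    exact ⟨f * u, Set.mem_union_right _ (Set.mem_biUnion hf ⟨u, hu, rfl⟩),
      (f * u)⁻¹ * g, hl, by group⟩
  -- Step 2: the subgroup `V₀ = ⋂_{c ∈ C} c⁻¹ U c`.
  set V₀ : Subgroup G :=
    { carrier := {x | ∀ c ∈ C, c * x * c⁻¹ ∈ U}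
      one_mem' := by intro c _; simpa using one_mem U
      mul_mem' := by
        intro a b ha hb c hc
        have : (c * a * c⁻¹) * (c * b * c⁻¹) ∈ U := mul_mem (ha c hc) (hb c hc)
        simpa [mul_assoc] using this
      inv_mem' := by
        intro a ha c hc
        have : (c * a * c⁻¹)⁻¹ ∈ U := inv_mem (ha c hc)
        simpa [mul_assoc] using this } with hV₀
  have hV₀mem : ∀ x : G, x ∈ V₀ ↔ ∀ c ∈ C, c * x * c⁻¹ ∈ U := fun x => Iff.rfl
  -- `V₀` is open, via the tube lemma.
  have hφ : Continuous fun p : G × G => p.1 * p.2 * p.1⁻¹ := by continuity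
  have hV₀open : IsOpen (V₀ : Set G) := by
    have hsub : C ×ˢ ({1} : Set G) ⊆ (fun p : G × G => p.1 * p.2 * p.1⁻¹) ⁻¹' (U : Set G) := by
      rintro ⟨c, x⟩ ⟨hc, hx⟩
      simp only [Set.mem_singleton_iff] at hx
      subst hx
      simpa using one_mem U
    obtain ⟨u, v, hu, hv, hCu, h1v, huv⟩ := generalized_tube_lemma hCcompact
      isCompact_singleton (hUopen.preimage hφ) hsub
    refine Subgroup.isOpen_of_mem_nhds V₀ (Filter.mem_of_superset (hv.mem_nhds (h1v rfl)) ?_)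
    intro x hx c hc
    exact huv (Set.mk_mem_prod (hCu hc) hx)
  have hV₀leU : (V₀ : Set G) ⊆ (U : Set G) := by
    intro x hx
    simpa using hx 1 h1C
  have hV₀compact : IsCompact (V₀ : Set G) :=
    hUcompact.of_isClosed_subset (V₀.isClosed_of_isOpen hV₀open) hV₀leU
  -- Step 3: `V = V₀ ⊓ L`.
  refine ⟨V₀ ⊓ L, inf_le_right, ?_, ⟨(V₀ : Set G), hV₀open, by simp⟩, ?_⟩
  · exact hV₀compact.of_isClosed_subset
      ((V₀.isClosed_of_isOpen hV₀open).inter hLclosed) (by simp [Set.inter_subset_left])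
  · rw [eq_bot_iff]
    intro x hx
    have hx' : ∀ b : L, (b : G) * (x : G) * (b : G)⁻¹ ∈ V₀ := by
      intro b
      have h1 : b * x * b⁻¹ ∈ ((V₀ ⊓ L).subgroupOf L) := hx b
      have h2 : ((b * x * b⁻¹ : L) : G) ∈ V₀ ⊓ L := h1
      simpa using h2.1
    have hxU : (x : G) ∈ U.normalCore := by
      intro g
      obtain ⟨c, hc, l, hl, rfl⟩ := hCL g
      have h1 : l * (x : G) * l⁻¹ ∈ V₀ := hx' ⟨l, hl⟩
      have := (hV₀mem _).1 h1 c hc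
      simpa [mul_assoc] using this
    rw [hUcore, Subgroup.mem_bot] at hxU
    simpa [Subgroup.mem_bot] using Subtype.ext hxU
end

section
/- Let G be a tdlc group (a Hausdorff, locally compact, totally disconnected topological group) admitting a compact open subgroup with trivial normal core in G, and let Γ be a finitely generated cocompact lattice of G (a discrete subgroup Γ such that G/Γ is compact and Γ is finitely generated as an abstract group). Then Γ has finite index in its normalizer N_G(Γ). -/
open Topology

theorem stmt4 {G : Type*} [Group G] [TopologicalSpace G] [IsTopologicalGroup G]
    [T2Space G] [LocallyCompactSpace G] [TotallyDisconnectedSpace G]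
    (U : Subgroup G) (hUcompact : IsCompact (U : Set G)) (hUopen : IsOpen (U : Set G))
    (hUcore : U.normalCore = ⊥)
    (Γ : Subgroup G) (hdisc : DiscreteTopology ↥Γ) (hcoc : CompactSpace (G ⧸ Γ))
    (hfg : Γ.FG) :
    Γ.relIndex (Subgroup.normalizer (Γ : Set G)) ≠ 0 := by
  -- Step 1: a compact set K with K · Γ = G
  obtain ⟨K, hKcomp, hKcov⟩ : ∃ K : Set G, IsCompact K ∧ ∀ g : G, ∃ k ∈ K, k⁻¹ * g ∈ Γ := by
    have hsurj := QuotientGroup.mk_surjective (s := Γ)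
    choose rep hrep using hsurj
    choose C hCc hCn using fun q : G ⧸ Γ => exists_compact_mem_nhds (rep q)
    have hcover : ∀ q : G ⧸ Γ, (QuotientGroup.mk '' interior (C q)) ∈ 𝓝 q := by
      intro q
      have := (QuotientGroup.isOpenMap_coe (N := Γ)).image_mem_nhds
        (interior_mem_nhds.mpr (hCn q))
      rwa [hrep q] at this
    obtain ⟨t, -, ht⟩ := isCompact_univ.elim_nhds_subcover
        (fun q => QuotientGroup.mk '' interior (C q)) (fun q _ => hcover q)
    refine ⟨⋃ q ∈ t, C q, t.isCompact_biUnion (fun q _ => hCc q), fun g => ?_⟩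
    have : (QuotientGroup.mk g : G ⧸ Γ) ∈ ⋃ q ∈ t, QuotientGroup.mk '' interior (C q) :=
      ht (Set.mem_univ _)
    obtain ⟨q, hq, c, hc, hcg⟩ := by simpa using this
    refine ⟨c, Set.mem_biUnion hq (interior_subset hc), ?_⟩
    exact QuotientGroup.eq.mp hcg
  -- Step 2: a neighborhood W of 1 whose K-conjugates lie in U
  obtain ⟨W, hWn, hWU⟩ : ∃ W ∈ 𝓝 (1 : G), ∀ k ∈ K, ∀ w ∈ W, k * w * k⁻¹ ∈ U := by
    have hc : ∀ k : G, ∃ O ∈ 𝓝 k, ∃ W ∈ 𝓝 (1 : G),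
        ∀ a ∈ O, ∀ w ∈ W, a * w * a⁻¹ ∈ U := by
      intro k
      have hcont : Continuous fun p : G × G => p.1 * p.2 * p.1⁻¹ := by continuity
      have h1 : (fun p : G × G => p.1 * p.2 * p.1⁻¹) ⁻¹' U ∈ 𝓝 (k, (1 : G)) := by
        refine hcont.continuousAt.preimage_mem_nhds ?_
        simpa using hUopen.mem_nhds U.one_mem
      rw [nhds_prod_eq, Filter.mem_prod_iff] at h1
      obtain ⟨O, hO, W, hW, hOW⟩ := h1
      exact ⟨O, hO, W, hW, fun a ha w hw => hOW (Set.mk_mem_prod ha hw)⟩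
    choose O hO W hW hOW using hc
    obtain ⟨t, -, ht⟩ := hKcomp.elim_nhds_subcover O (fun k _ => hO k)
    refine ⟨⋂ k ∈ t, W k, (Filter.biInter_finset_mem t).mpr (fun k _ => hW k), ?_⟩
    intro k hk w hw
    obtain ⟨x, hx, hkx⟩ := Set.mem_iUnion₂.mp (ht hk)
    exact hOW x k hkx w (Set.mem_iInter₂.mp hw x hx)
  -- Step 3: elements of the normalizer near 1 are trivial
  obtain ⟨Ω, hΩn, hΩ⟩ : ∃ Ω ∈ 𝓝 (1 : G), ∀ n ∈ Ω, n ∈ Subgroup.normalizer (Γ : Set G) → n = 1 := by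
    obtain ⟨T, hT⟩ := hfg
    have hTmem : ∀ γ ∈ T, γ ∈ Γ := fun γ hγ => hT ▸ Subgroup.subset_closure hγ
    have hsing : ∀ γ : G, ∃ Ωγ ∈ 𝓝 (1 : G),
        ∀ g ∈ Ωγ, g ∈ Subgroup.normalizer (Γ : Set G) → γ ∈ T → g * γ * g⁻¹ = γ := by
      intro γ
      by_cases hγ : γ ∈ T
      · obtain ⟨S, hSn, hSΓ⟩ := nhds_inter_eq_singleton_of_mem_discrete
          (s := (Γ : Set G)) (isDiscrete_iff_discreteTopology.mpr hdisc) (hTmem γ hγ)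
        have hcont : Continuous fun g : G => g * γ * g⁻¹ := by continuity
        have hpre : (fun g : G => g * γ * g⁻¹) ⁻¹' S ∈ 𝓝 (1 : G) := by
          refine hcont.continuousAt.preimage_mem_nhds ?_
          simpa using hSn
        refine ⟨_, hpre, fun g hg hgN _ => ?_⟩
        have h1 : g * γ * g⁻¹ ∈ S ∩ (Γ : Set G) :=
          ⟨hg, (Subgroup.mem_normalizer_iff.mp hgN γ).mp (hTmem γ hγ)⟩
        rw [hSΓ] at h1
        exact h1
      · exact ⟨Set.univ, Filter.univ_mem, fun _ _ _ h => absurd h hγ⟩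
    choose Ωγ hΩγn hΩγ using hsing
    refine ⟨W ∩ ⋂ γ ∈ T, Ωγ γ, Filter.inter_mem hWn
      ((Filter.biInter_finset_mem T).mpr fun γ _ => hΩγn γ), ?_⟩
    intro n hn hnN
    have hcomm : ∀ γ ∈ Γ, n * γ = γ * n := by
      have hle : Γ ≤ Subgroup.centralizer {n} := by
        rw [← hT, Subgroup.closure_le]
        intro γ hγ
        rw [SetLike.mem_coe, Subgroup.mem_centralizer_iff]
        intro g hg
        rw [Set.mem_singleton_iff] at hg
        rw [hg]
        have h3 := hΩγ γ n (Set.mem_iInter₂.mp hn.2 γ hγ) hnN hγ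
        rw [mul_inv_eq_iff_eq_mul] at h3
        exact h3
      intro γ hγ
      exact Subgroup.mem_centralizer_iff.mp (hle hγ) n rfl
    have hcore : n ∈ U.normalCore := by
      intro b
      obtain ⟨k, hk, hkb⟩ := hKcov b
      have h4 : (k⁻¹ * b) * n = n * (k⁻¹ * b) := (hcomm _ hkb).symm
      have h2 : b * n * b⁻¹ = k * n * k⁻¹ := by
        calc b * n * b⁻¹ = k * (k⁻¹ * b * n) * b⁻¹ := by group
          _ = k * (n * (k⁻¹ * b)) * b⁻¹ := by rw [h4]
          _ = k * n * k⁻¹ := by group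
      rw [h2]
      exact hWU k hk n hn.1
    rw [hUcore] at hcore
    simpa using hcore
  -- Step 4: conclude finiteness of the index
  set N := Subgroup.normalizer (Γ : Set G) with hN
  obtain ⟨O, hOΩ, hOopen, hO1⟩ := mem_nhds_iff.mp hΩn
  have hdiscN : DiscreteTopology ↥N := by
    apply discreteTopology_of_isOpen_singleton_one
    have heq : ({1} : Set ↥N) = (Subtype.val) ⁻¹' O := by
      ext x
      simp only [Set.mem_singleton_iff, Set.mem_preimage]
      constructor
      · rintro rfl; exact hO1
      · intro hx
        exact Subtype.ext (hΩ x (hOΩ hx) x.2)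
    rw [heq]
    exact hOopen.preimage continuous_subtype_val
  have hNclosed : IsClosed (N : Set G) := Subgroup.isClosed_of_discrete
  set Q : Set (G ⧸ Γ) := QuotientGroup.mk '' (N : Set G) with hQ
  have hpre : QuotientGroup.mk ⁻¹' Q = (N : Set G) := by
    ext g
    simp only [hQ, Set.mem_preimage, Set.mem_image, SetLike.mem_coe]
    constructor
    · rintro ⟨m, hm, hmg⟩
      have hmem : m⁻¹ * g ∈ Γ := QuotientGroup.eq.mp hmg
      have hgm : g = m * (m⁻¹ * g) := by group
      rw [hgm]
      exact N.mul_mem hm (Subgroup.le_normalizer hmem)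
    · intro hg; exact ⟨g, hg, rfl⟩
  have hQclosed : IsClosed Q := by
    rw [← (QuotientGroup.isQuotientMap_mk Γ).isClosed_preimage, hpre]
    exact hNclosed
  have hQcompact : IsCompact Q := hQclosed.isCompact
  have hiso : ∀ q ∈ Q, ∃ V ∈ 𝓝 q, ∀ p ∈ V ∩ Q, p = q := by
    rintro q ⟨m, hm, rfl⟩
    refine ⟨QuotientGroup.mk '' ((· * m) '' O), ?_, ?_⟩
    · apply (QuotientGroup.isOpenMap_coe).image_mem_nhds
      have h5 : (· * m) '' O ∈ 𝓝 (1 * m) := (Homeomorph.mulRight m).isOpenMap.image_mem_nhds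
        (hOopen.mem_nhds hO1)
      simpa using h5
    · rintro p ⟨⟨x, ⟨o, ho, rfl⟩, rfl⟩, ⟨m', hm', hmp⟩⟩
      have h1 : m'⁻¹ * (o * m) ∈ Γ := QuotientGroup.eq.mp hmp
      have ho' : o = m' * (m'⁻¹ * (o * m)) * m⁻¹ := by group
      have hoN : o ∈ N := by
        rw [ho']
        exact N.mul_mem (N.mul_mem hm' (Subgroup.le_normalizer h1)) (N.inv_mem hm)
      have ho1 : o = 1 := hΩ o (hOΩ ho) hoN
      subst ho1
      simp
  choose V hVn hViso using hiso
  obtain ⟨t, ht⟩ := hQcompact.elim_nhds_subcover' (fun q hq => V q hq) (fun q hq => hVn q hq)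
  have hQfin : Q.Finite := by
    apply Set.Finite.subset (t.finite_toSet.image Subtype.val)
    intro q hq
    obtain ⟨x, hx, hqx⟩ := Set.mem_iUnion₂.mp (ht hq)
    have hq' : q = ↑x := hViso x.1 x.2 q ⟨hqx, hq⟩
    exact ⟨x, hx, hq'.symm⟩
  have hfin : Finite (↥N ⧸ Γ.subgroupOf N) := by
    have : Finite ↥Q := hQfin.to_subtype
    refine Finite.of_injective (fun x => (⟨QuotientGroup.mk (x.out : G),
      ⟨(x.out : G), x.out.2, rfl⟩⟩ : ↥Q)) ?_
    intro x y hxy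
    have h2 : ((x.out : G) : G ⧸ Γ) = ((y.out : G) : G ⧸ Γ) := congrArg Subtype.val hxy
    have h3 : (x.out : G)⁻¹ * (y.out : G) ∈ Γ := QuotientGroup.eq.mp h2
    have h4 : (x.out)⁻¹ * y.out ∈ Γ.subgroupOf N := h3
    rw [← Quotient.out_eq x, ← Quotient.out_eq y]
    exact Quotient.sound' (QuotientGroup.leftRel_apply.mpr h4)
  rw [Subgroup.relIndex, Subgroup.index]
  have hne : Nonempty (↥N ⧸ Γ.subgroupOf N) := ⟨1⟩
  exact Nat.card_ne_zero.mpr ⟨hne, hfin⟩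
end

section
/- Let G be a compactly generated tdlc group (a Hausdorff, locally compact, totally disconnected topological group generated by a compact subset) such that the discrete residual Res(G) is open in G, and such that every closed normal subgroup of G is either discrete (in the subspace topology) or contains Res(G). Then G admits a compact open subgroup with trivial normal core in G. -/
/-- The discrete residual of a topological group `G`: the intersection of all open normal
subgroups of `G`. -/
def discreteResidual (G : Type*) [Group G] [TopologicalSpace G] : Subgroup G :=
  ⨅ (O : Subgroup G) (_ : IsOpen (O : Set G)) (_ : O.Normal), O

open scoped Pointwise

/-- Van Dantzig: in a tdlc group, every neighborhood of 1 contains a compact open subgroup. -/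
lemma van_dantzig {G : Type*} [Group G] [TopologicalSpace G] [IsTopologicalGroup G]
    [T2Space G] [LocallyCompactSpace G] [TotallyDisconnectedSpace G]
    {W : Set G} (hW : IsOpen W) (h1 : (1 : G) ∈ W) :
    ∃ U : Subgroup G, IsCompact (U : Set G) ∧ IsOpen (U : Set G) ∧ (U : Set G) ⊆ W := by
  obtain ⟨K, hKc, hK1, hKW⟩ := exists_compact_subset hW h1
  obtain ⟨C, hCclopen, hC1, hCK⟩ :=
    loc_compact_Haus_tot_disc_of_zero_dim.exists_subset_of_mem_open hK1 isOpen_interior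
  have hCcomp : IsCompact C :=
    hKc.of_isClosed_subset hCclopen.1 (hCK.trans interior_subset)
  -- find open symmetric V ⊆ C with C * V ⊆ C
  obtain ⟨V, hVnhd, hCV⟩ := compact_open_separated_mul_right hCcomp hCclopen.2 subset_rfl
  obtain ⟨V₀, hV₀V, hV₀open, hV₀1⟩ := mem_nhds_iff.mp hVnhd
  set V₁ : Set G := V₀ ∩ V₀⁻¹ ∩ (C ∩ C⁻¹) with hV₁def
  have hV₁open : IsOpen V₁ :=
    ((hV₀open.inter hV₀open.inv).inter (hCclopen.2.inter hCclopen.2.inv))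
  have hV₁1 : (1 : G) ∈ V₁ := by
    simp [hV₁def, hV₀1, hC1]
  have hV₁symm : V₁⁻¹ = V₁ := by
    rw [hV₁def, Set.inter_inv, Set.inter_inv, Set.inter_inv, inv_inv, inv_inv,
      Set.inter_comm V₀⁻¹ V₀, Set.inter_comm C⁻¹ C]
  have hV₁C : V₁ ⊆ C := fun x hx => hx.2.1
  have hV₁V : V₁ ⊆ V := fun x hx => hV₀V hx.1.1
  have hpow : ∀ n : ℕ, V₁ ^ (n + 1) ⊆ C := by
    intro n
    induction n with
    | zero => simpa using hV₁C
    | succ n ih =>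
      calc V₁ ^ (n + 1 + 1) = V₁ ^ (n + 1) * V₁ := by rw [pow_succ]
        _ ⊆ C * V := Set.mul_subset_mul ih hV₁V
        _ ⊆ C := hCV
  let S : Subgroup G :=
    { carrier := ⋃ n, V₁ ^ (n + 1)
      mul_mem' := fun ha hb => by
        rcases Set.mem_iUnion.mp ha with ⟨k, hk⟩
        rcases Set.mem_iUnion.mp hb with ⟨l, hl⟩
        refine Set.mem_iUnion.mpr ⟨k + 1 + l, ?_⟩
        rw [add_assoc, pow_add]
        exact Set.mul_mem_mul hk hl
      one_mem' := Set.mem_iUnion.mpr ⟨0, by simpa using hV₁1⟩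
      inv_mem' := fun {x} hx => by
        rcases Set.mem_iUnion.mp hx with ⟨k, hk⟩
        refine Set.mem_iUnion.mpr ⟨k, ?_⟩
        have : x⁻¹ ∈ (V₁ ^ (k + 1))⁻¹ := Set.inv_mem_inv.mpr hk
        rwa [← inv_pow, hV₁symm] at this }
  have hSC : (S : Set G) ⊆ C := Set.iUnion_subset hpow
  have hSopen : IsOpen (S : Set G) := by
    apply Subgroup.isOpen_of_mem_nhds
    exact Filter.mem_of_superset (hV₁open.mem_nhds hV₁1)
      (Set.subset_iUnion_of_subset 0 (by simp))
  exact ⟨S, hCcomp.of_isClosed_subset (S.isClosed_of_isOpen hSopen) hSC, hSopen,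
    hSC.trans ((hCK.trans interior_subset).trans hKW)⟩

lemma normalCore_isClosed {G : Type*} [Group G] [TopologicalSpace G] [IsTopologicalGroup G]
    (U : Subgroup G) (hU : IsClosed (U : Set G)) : IsClosed (U.normalCore : Set G) := by
  have : (U.normalCore : Set G) = ⋂ b : G, (fun a => b * a * b⁻¹) ⁻¹' (U : Set G) := by
    ext a
    constructor
    · intro ha
      exact Set.mem_iInter.mpr fun b => ha b
    · intro ha b
      exact Set.mem_iInter.mp ha b
  rw [this]
  exact isClosed_iInter fun b =>
    hU.preimage ((continuous_const.mul continuous_id).mul continuous_const)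

theorem stmt5 {G : Type*} [Group G] [TopologicalSpace G] [IsTopologicalGroup G]
    [T2Space G] [LocallyCompactSpace G] [TotallyDisconnectedSpace G]
    (hcg : ∃ S : Set G, IsCompact S ∧ Subgroup.closure S = ⊤)
    (hres : IsOpen ((discreteResidual G : Subgroup G) : Set G))
    (hnormal : ∀ N : Subgroup G, IsClosed (N : Set G) → N.Normal →
      DiscreteTopology ↥N ∨ discreteResidual G ≤ N) :
    ∃ U : Subgroup G, IsCompact (U : Set G) ∧ IsOpen (U : Set G) ∧ U.normalCore = ⊥ := by
  by_cases hbot : discreteResidual G = ⊥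
  · -- `G` is discrete; the trivial subgroup works
    refine ⟨⊥, by simp, ?_, le_bot_iff.mp (Subgroup.normalCore_le ⊥)⟩
    have h : ((⊥ : Subgroup G) : Set G) = ((discreteResidual G : Subgroup G) : Set G) := by
      rw [hbot]
    rw [h]; exact hres
  · obtain ⟨x, hxR, hx1⟩ : ∃ x ∈ discreteResidual G, x ≠ 1 := by
      by_contra h
      push_neg at h
      exact hbot (Subgroup.eq_bot_iff_forall _ |>.mpr h)
    -- a compact open subgroup avoiding x
    obtain ⟨V, hVcomp, hVopen, hVsub⟩ :=
      van_dantzig (G := G) (W := {x}ᶜ) isClosed_singleton.isOpen_compl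
        (by simpa using hx1.symm)
    have hxV : x ∉ V := fun hxV => hVsub hxV rfl
    -- the normal core of V is a closed normal subgroup not containing Res(G)
    have hNclosed : IsClosed (V.normalCore : Set G) :=
      normalCore_isClosed V (hVcomp.isClosed)
    have hNdisc : DiscreteTopology ↥V.normalCore := by
      rcases hnormal V.normalCore hNclosed V.normalCore_normal with h | h
      · exact h
      · exact absurd (V.normalCore_le (h hxR)) hxV
    -- hence the core is finite
    have hNcomp : IsCompact (V.normalCore : Set G) :=
      hVcomp.of_isClosed_subset hNclosed V.normalCore_le
    have hNfin : (V.normalCore : Set G).Finite := hNcomp.finite ⟨hNdisc⟩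
    -- for each nontrivial element of the core, a compact open subgroup avoiding it
    set F : Set G := (V.normalCore : Set G) \ {1} with hFdef
    have hFfin : F.Finite := hNfin.diff
    haveI : Finite ↥F := hFfin.to_subtype
    have hW : ∀ n : ↥F, ∃ U : Subgroup G,
        IsCompact (U : Set G) ∧ IsOpen (U : Set G) ∧ (U : Set G) ⊆ {(n : G)}ᶜ := by
      intro n
      exact van_dantzig isClosed_singleton.isOpen_compl (by simpa using fun h => n.2.2 h.symm)
    choose W hWcomp hWopen hWsub using hW
    refine ⟨V ⊓ ⨅ n : ↥F, W n, ?_, ?_, ?_⟩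
    · -- compact
      have hUopen : IsOpen ((V ⊓ ⨅ n : ↥F, W n : Subgroup G) : Set G) := by
        rw [Subgroup.coe_inf, Subgroup.coe_iInf]
        exact hVopen.inter (isOpen_iInter_of_finite fun n => hWopen n)
      refine hVcomp.of_isClosed_subset
        ((V ⊓ ⨅ n : ↥F, W n).isClosed_of_isOpen hUopen) ?_
      exact SetLike.coe_subset_coe.mpr inf_le_left
    · rw [Subgroup.coe_inf, Subgroup.coe_iInf]
      exact hVopen.inter (isOpen_iInter_of_finite fun n => hWopen n)
    · -- trivial normal core
      rw [Subgroup.eq_bot_iff_forall]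
      intro g hg
      by_contra hg1
      have hgV : g ∈ V.normalCore :=
        Subgroup.normalCore_mono inf_le_left hg
      have hgF : g ∈ F := ⟨hgV, hg1⟩
      have hgW : g ∈ W ⟨g, hgF⟩ := by
        have h1 : g ∈ (V ⊓ ⨅ n : ↥F, W n : Subgroup G) := Subgroup.normalCore_le _ hg
        have h2 : (V ⊓ ⨅ n : ↥F, W n : Subgroup G) ≤ W ⟨g, hgF⟩ :=
          le_trans inf_le_right (iInf_le _ _)
        exact h2 h1
      exact hWsub ⟨g, hgF⟩ hgW rfl
end

section
/- Let G be a tdlc group (a Hausdorff, locally compact, totally disconnected topological group) admitting a compact open subgroup with trivial normal core, and let Γ be a finitely generated cocompact lattice of G. Let H be a finitely generated subgroup of the commensurator Comm_G(Γ) admitting a finite index subgroup H' such that every h ∈ H' can be written h = cγ with γ ∈ Γ and c ∈ G centralizing some finite index subgroup of Γ. Then H is virtually contained in Γ, i.e. H ∩ Γ has finite index in H. -/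
section Aux

variable {G : Type*} [Group G]

theorem mem_normalCore_iff (U : Subgroup G) {a : G} :
    a ∈ U.normalCore ↔ ∀ b : G, b * a * b⁻¹ ∈ U := Iff.rfl

theorem mem_centralizer_of_closure {T : Set G} {w : G} (h : ∀ s ∈ T, w * s = s * w) :
    w ∈ Subgroup.centralizer (Subgroup.closure T : Set G) :=
  Subgroup.mem_centralizer_iff.2 fun y hy => by
    have hle : Subgroup.closure T ≤ Subgroup.centralizer {w} :=
      (Subgroup.closure_le _).2 fun s hs => Subgroup.mem_centralizer_iff.2
        (fun b hb => by rw [Set.mem_singleton_iff] at hb; subst hb; exact h s hs)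
    exact (Subgroup.mem_centralizer_iff.1 (hle hy) w rfl).symm

/-- The product set `C * Γ` when `Γ` normalizes `C`. -/
def prodSubgroup (C Γ : Subgroup G)
    (hconj : ∀ γ ∈ Γ, ∀ c ∈ C, γ * c * γ⁻¹ ∈ C) : Subgroup G where
  carrier := {x | ∃ c ∈ C, ∃ γ ∈ Γ, x = c * γ}
  one_mem' := ⟨1, C.one_mem, 1, Γ.one_mem, (one_mul 1).symm⟩
  mul_mem' := by
    rintro a b ⟨c1, hc1, γ1, hγ1, rfl⟩ ⟨c2, hc2, γ2, hγ2, rfl⟩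
    exact ⟨c1 * (γ1 * c2 * γ1⁻¹), mul_mem hc1 (hconj γ1 hγ1 c2 hc2), γ1 * γ2,
      mul_mem hγ1 hγ2, by group⟩
  inv_mem' := by
    rintro a ⟨c, hc, γ, hγ, rfl⟩
    refine ⟨γ⁻¹ * c⁻¹ * γ, ?_, γ⁻¹, inv_mem hγ, by group⟩
    have := hconj γ⁻¹ (inv_mem hγ) c⁻¹ (inv_mem hc)
    rwa [inv_inv] at this

theorem mem_prodSubgroup {C Γ : Subgroup G}
    {hconj : ∀ γ ∈ Γ, ∀ c ∈ C, γ * c * γ⁻¹ ∈ C} {x : G} :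
    x ∈ prodSubgroup C Γ hconj ↔ ∃ c ∈ C, ∃ γ ∈ Γ, x = c * γ := Iff.rfl

end Aux

section Top

variable {G : Type*} [Group G] [TopologicalSpace G]

theorem exists_isolating_open (Γ : Subgroup G) [DiscreteTopology ↥Γ] {γ0 : G} (hγ0 : γ0 ∈ Γ) :
    ∃ O : Set G, IsOpen O ∧ γ0 ∈ O ∧ ∀ x ∈ O, x ∈ Γ → x = γ0 := by
  have h1 : IsOpen ({(⟨γ0, hγ0⟩ : ↥Γ)} : Set ↥Γ) := isOpen_discrete _
  rw [isOpen_induced_iff] at h1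
  obtain ⟨O, hO, hOeq⟩ := h1
  refine ⟨O, hO, ?_, ?_⟩
  · have h2 : (⟨γ0, hγ0⟩ : ↥Γ) ∈ Subtype.val ⁻¹' O := by rw [hOeq]; exact rfl
    exact h2
  · intro x hx hxΓ
    have h3 : (⟨x, hxΓ⟩ : ↥Γ) ∈ Subtype.val ⁻¹' O := hx
    rw [hOeq, Set.mem_singleton_iff] at h3
    exact Subtype.ext_iff.1 h3

variable [IsTopologicalGroup G]

theorem exists_compact_transversal [LocallyCompactSpace G] (Γ : Subgroup G)
    (hcoc : CompactSpace (G ⧸ Γ)) :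
    ∃ Ω : Set G, IsCompact Ω ∧ ∀ g : G, ∃ ω ∈ Ω, ∃ γ ∈ Γ, g = ω * γ := by
  choose K hKc hKn using fun x : G => exists_compact_mem_nhds x
  have hcover : (Set.univ : Set (G ⧸ Γ)) ⊆
      ⋃ x : G, QuotientGroup.mk '' interior (K x) := by
    rintro y -
    obtain ⟨g, rfl⟩ := QuotientGroup.mk_surjective y
    exact Set.mem_iUnion.2 ⟨g, ⟨g, mem_interior_iff_mem_nhds.2 (hKn g), rfl⟩⟩
  obtain ⟨t, ht⟩ := isCompact_univ.elim_finite_subcover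
    (fun x : G => QuotientGroup.mk '' interior (K x))
    (fun x => QuotientGroup.isOpenMap_coe _ isOpen_interior) hcover
  refine ⟨⋃ x ∈ t, K x, t.finite_toSet.isCompact_biUnion fun x _ => hKc x, fun g => ?_⟩
  have hg := ht (Set.mem_univ (QuotientGroup.mk g : G ⧸ Γ))
  rw [Set.mem_iUnion₂] at hg
  obtain ⟨x, hx, k, hk, hkg⟩ := hg
  exact ⟨k, Set.mem_biUnion hx (interior_subset hk), k⁻¹ * g, QuotientGroup.eq.1 hkg, by group⟩

theorem exists_conj_nhds {Ω : Set G} (hΩ : IsCompact Ω) {U : Subgroup G}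
    (hU : IsOpen (U : Set G)) :
    ∃ V : Set G, IsOpen V ∧ (1 : G) ∈ V ∧ ∀ ω ∈ Ω, ∀ w ∈ V, ω * w * ω⁻¹ ∈ U := by
  have hcont : Continuous fun p : G × G => p.1 * p.2 * p.1⁻¹ := by fun_prop
  have hn : IsOpen ((fun p : G × G => p.1 * p.2 * p.1⁻¹) ⁻¹' (U : Set G)) :=
    hU.preimage hcont
  have hsub : Ω ×ˢ ({1} : Set G) ⊆ (fun p : G × G => p.1 * p.2 * p.1⁻¹) ⁻¹' (U : Set G) := by
    rintro ⟨a, b⟩ hab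
    obtain ⟨-, hb⟩ := hab
    rw [Set.mem_singleton_iff] at hb
    subst hb
    show a * 1 * a⁻¹ ∈ (U : Set G)
    rw [mul_one, mul_inv_cancel]
    exact U.one_mem
  obtain ⟨u, v, _, hv, hΩu, h1v, huv⟩ :=
    generalized_tube_lemma hΩ isCompact_singleton hn hsub
  exact ⟨v, hv, h1v rfl, fun ω hω w hw => huv (Set.mk_mem_prod (hΩu hω) hw)⟩

theorem exists_sq_subset {W : Set G} (hW : IsOpen W) (h1 : (1 : G) ∈ W) :
    ∃ V, IsOpen V ∧ (1 : G) ∈ V ∧ ∀ a ∈ V, ∀ b ∈ V, a⁻¹ * b ∈ W := by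
  have hcont : Continuous fun p : G × G => p.1⁻¹ * p.2 := by fun_prop
  have hn : IsOpen ((fun p : G × G => p.1⁻¹ * p.2) ⁻¹' W) := hW.preimage hcont
  have hmem : ((1 : G), (1 : G)) ∈ (fun p : G × G => p.1⁻¹ * p.2) ⁻¹' W := by
    show (1 : G)⁻¹ * 1 ∈ W
    rwa [inv_one, one_mul]
  obtain ⟨u, v, hu, hv, h1u, h1v, huv⟩ := isOpen_prod_iff.1 hn 1 1 hmem
  exact ⟨u ∩ v, hu.inter hv, ⟨h1u, h1v⟩,
    fun a ha b hb => huv (Set.mk_mem_prod ha.1 hb.2)⟩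

end Top

open Pointwise in
set_option maxHeartbeats 1000000 in
theorem stmt11 {G : Type*} [Group G] [TopologicalSpace G] [IsTopologicalGroup G]
    [T2Space G] [LocallyCompactSpace G] [TotallyDisconnectedSpace G]
    (U : Subgroup G) (hUcompact : IsCompact (U : Set G)) (hUopen : IsOpen (U : Set G))
    (hUcore : U.normalCore = ⊥)
    (Γ : Subgroup G) (hdisc : DiscreteTopology ↥Γ) (hcoc : CompactSpace (G ⧸ Γ))
    (hfg : Γ.FG)
    (H : Subgroup G) (hHcomm : ∀ h ∈ H, Subgroup.Commensurable (conjSubgroup h Γ) Γ) (hHfg : H.FG)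
    (H' : Subgroup G) (hH'le : H' ≤ H) (hH'fi : H'.relIndex H ≠ 0)
    (hdecomp : ∀ h ∈ H', ∃ c γ : G, γ ∈ Γ ∧ h = c * γ ∧
      ∃ Γ0 : Subgroup G, Γ0 ≤ Γ ∧ Γ0.relIndex Γ ≠ 0 ∧ ∀ x ∈ Γ0, c * x = x * c) :
    Γ.relIndex H ≠ 0 := by
  classical
  -- H' is finitely generated
  have hH'fg : H'.FG := by
    haveI : Group.FG ↥H := (Group.fg_iff_subgroup_fg H).2 hHfg
    haveI : (H'.subgroupOf H).FiniteIndex := ⟨hH'fi⟩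
    have h1 : (H'.subgroupOf H).FG := (Group.fg_iff_subgroup_fg _).1 inferInstance
    rw [Subgroup.fg_iff] at h1 ⊢
    obtain ⟨S, hS, hSfin⟩ := h1
    refine ⟨H.subtype '' S, ?_, hSfin.image _⟩
    rw [← MonoidHom.map_closure, hS, Subgroup.subgroupOf_map_subtype, inf_of_le_left hH'le]
  obtain ⟨SH, hSH⟩ := hH'fg
  have hmemH' : ∀ x ∈ SH, (x : G) ∈ H' := fun x hx => hSH ▸ Subgroup.subset_closure hx
  choose cf γf hγf heqf Γ0f hΓ0le hΓ0fi hΓ0c using hdecomp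
  -- a uniform finite-index subgroup of Γ centralized by all the `c`'s
  set Γ1 : Subgroup G := (⨅ x : {a // a ∈ SH}, Γ0f x (hmemH' x x.2)) ⊓ Γ with hΓ1
  have hΓ1le : Γ1 ≤ Γ := inf_le_right
  have hΓ1fi : Γ1.relIndex Γ ≠ 0 := by
    rw [hΓ1, Subgroup.inf_relIndex_right]
    exact Subgroup.relIndex_iInf_ne_zero fun x => hΓ0fi x (hmemH' x x.2)
  haveI : (Γ1.subgroupOf Γ).FiniteIndex := ⟨hΓ1fi⟩
  -- pass to the normal core
  set N : Subgroup ↥Γ := (Γ1.subgroupOf Γ).normalCore with hN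
  haveI hNfi : N.FiniteIndex := Subgroup.finiteIndex_normalCore _
  set Γs : Subgroup G := N.map Γ.subtype with hΓs
  have hΓsleΓ : Γs ≤ Γ := Subgroup.map_subtype_le N
  have hΓsle1 : Γs ≤ Γ1 := by
    calc Γs ≤ (Γ1.subgroupOf Γ).map Γ.subtype :=
          Subgroup.map_mono (Subgroup.normalCore_le _)
    _ = Γ1 ⊓ Γ := Subgroup.subgroupOf_map_subtype _ _
    _ ≤ Γ1 := inf_le_left
  have hΓsnormal : ∀ γ ∈ Γ, ∀ x ∈ Γs, γ * x * γ⁻¹ ∈ Γs := by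
    intro γ hγ x hx
    rw [hΓs, Subgroup.mem_map] at hx ⊢
    obtain ⟨n, hn, hnx⟩ := hx
    refine ⟨⟨γ, hγ⟩ * n * (⟨γ, hγ⟩ : ↥Γ)⁻¹,
      (Subgroup.normalCore_normal _).conj_mem n hn _, ?_⟩
    rw [← hnx]
    rfl
  -- finitely generated
  have hΓsfg : Γs.FG := by
    haveI : Group.FG ↥Γ := (Group.fg_iff_subgroup_fg Γ).2 hfg
    have h1 : N.FG := (Group.fg_iff_subgroup_fg N).1 inferInstance
    rw [Subgroup.fg_iff] at h1 ⊢
    obtain ⟨S, hS, hSfin⟩ := h1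
    exact ⟨Γ.subtype '' S, by rw [← MonoidHom.map_closure, hS], hSfin.image _⟩
  obtain ⟨T, hT⟩ := hΓsfg
  have hTΓs : ∀ s ∈ T, s ∈ Γs := fun s hs => hT ▸ Subgroup.subset_closure hs
  have hTΓ : ∀ s ∈ T, s ∈ Γ := fun s hs => hΓsleΓ (hTΓs s hs)
  -- the centralizer of Γs
  set C : Subgroup G := Subgroup.centralizer (Γs : Set G) with hC
  have hCmemT : ∀ w : G, (∀ s ∈ T, w * s = s * w) → w ∈ C := by
    intro w hw
    rw [hC, ← hT]
    exact mem_centralizer_of_closure fun s hs => hw s hs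
  have hCcomm : ∀ c ∈ C, ∀ y ∈ Γs, c * y = y * c := by
    intro c hc y hy
    exact (Subgroup.mem_centralizer_iff.1 hc y hy).symm
  have hconjC : ∀ γ ∈ Γ, ∀ c ∈ C, γ * c * γ⁻¹ ∈ C := by
    intro γ hγ c hc
    rw [hC, Subgroup.mem_centralizer_iff]
    intro y hy
    rw [SetLike.mem_coe] at hy
    have hz : γ⁻¹ * y * γ ∈ Γs := by
      have := hΓsnormal γ⁻¹ (inv_mem hγ) y hy
      rwa [inv_inv] at this
    have hcz : c * (γ⁻¹ * y * γ) = (γ⁻¹ * y * γ) * c := hCcomm c hc _ hz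
    calc y * (γ * c * γ⁻¹) = γ * ((γ⁻¹ * y * γ) * c) * γ⁻¹ := by group
    _ = γ * (c * (γ⁻¹ * y * γ)) * γ⁻¹ := by rw [hcz]
    _ = (γ * c * γ⁻¹) * y := by group
  -- the group M = C * Γ
  set M : Subgroup G := prodSubgroup C Γ hconjC with hM
  have hH'M : H' ≤ M := by
    rw [← hSH, Subgroup.closure_le]
    intro x hx
    rw [Finset.mem_coe] at hx
    rw [SetLike.mem_coe, hM, mem_prodSubgroup]
    refine ⟨cf x (hmemH' x hx), ?_, γf x (hmemH' x hx), hγf x (hmemH' x hx),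
      heqf x (hmemH' x hx)⟩
    rw [hC, Subgroup.mem_centralizer_iff]
    intro y hy
    rw [SetLike.mem_coe] at hy
    have h2 : Γ1 ≤ Γ0f x (hmemH' x hx) := le_trans inf_le_left (iInf_le _ (⟨x, hx⟩ : {a // a ∈ SH}))
    exact (hΓ0c x (hmemH' x hx) y (h2 (hΓsle1 hy))).symm
  -- compact transversal for Γs
  obtain ⟨Ω, hΩc, hΩdec⟩ := exists_compact_transversal Γ hcoc
  haveI : Finite (↥Γ ⧸ N) := N.finite_quotient_of_finiteIndex
  set R : Set G := Set.range (fun q : ↥Γ ⧸ N => ((Quotient.out q : ↥Γ) : G)) with hR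
  have hRfin : R.Finite := Set.finite_range _
  have hdecΓ : ∀ γ ∈ Γ, ∃ r ∈ R, ∃ δ ∈ Γs, γ = r * δ := by
    intro γ hγ
    set γ' : ↥Γ := ⟨γ, hγ⟩ with hγ'
    set q : ↥Γ ⧸ N := QuotientGroup.mk γ' with hq
    have h1 : (q.out)⁻¹ * γ' ∈ N := QuotientGroup.eq.1 (QuotientGroup.out_eq' q)
    refine ⟨(q.out : G), ⟨q, rfl⟩, (((q.out)⁻¹ * γ' : ↥Γ) : G),
      Subgroup.mem_map.2 ⟨_, h1, rfl⟩, ?_⟩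
    show γ = ↑q.out * ↑((q.out)⁻¹ * γ')
    rw [← Subgroup.coe_mul, mul_inv_cancel_left]
  set Ω2 : Set G := Ω * R with hΩ2
  have hΩ2c : IsCompact Ω2 := hΩc.mul hRfin.isCompact
  have hdecG : ∀ g : G, ∃ p ∈ Ω2, ∃ δ ∈ Γs, g = p * δ := by
    intro g
    obtain ⟨ω, hω, γ, hγ, rfl⟩ := hΩdec g
    obtain ⟨r, hr, δ, hδ, hγeq⟩ := hdecΓ γ hγ
    exact ⟨ω * r, Set.mul_mem_mul hω hr, δ, hδ, by rw [hγeq, mul_assoc]⟩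
  -- the small neighborhood W
  obtain ⟨O1, hO1o, hO1m, hO1iso⟩ := exists_isolating_open Γ Γ.one_mem
  obtain ⟨Vu, hVuo, hVum, hVu⟩ := exists_conj_nhds hΩ2c hUopen
  choose Os hOso hOsm hOsiso using fun s : {a // a ∈ T} => exists_isolating_open Γ (hTΓ s s.2)
  set W : Set G := O1 ∩ Vu ∩ ⋂ s : {a // a ∈ T}, (fun w => w * (s : G) * w⁻¹) ⁻¹' (Os s)
    with hWdef
  have hWo : IsOpen W :=
    (hO1o.inter hVuo).inter (isOpen_iInter_of_finite fun s => (hOso s).preimage (by fun_prop))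
  have hWm : (1 : G) ∈ W := by
    refine ⟨⟨hO1m, hVum⟩, Set.mem_iInter.2 fun s => ?_⟩
    show (1 : G) * (s : G) * (1 : G)⁻¹ ∈ Os s
    rw [one_mul, inv_one, mul_one]
    exact hOsm s
  -- the key claim: an element of W of the form c * γ is trivial
  have hclaim : ∀ w ∈ W, ∀ c ∈ C, ∀ γ ∈ Γ, w = c * γ → w = 1 := by
    intro w hw c hc γ hγ hwcγ
    obtain ⟨⟨hwO1, hwVu⟩, hwI⟩ := hw
    have hwT : ∀ s ∈ T, w * s = s * w := by
      intro s hs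
      have hsΓs := hTΓs s hs
      have hz : γ * s * γ⁻¹ ∈ Γs := hΓsnormal γ hγ s hsΓs
      have h1 : c * (γ * s * γ⁻¹) = (γ * s * γ⁻¹) * c := hCcomm c hc _ hz
      have hc' : c = w * γ⁻¹ := by rw [hwcγ]; group
      rw [hc'] at h1
      have h2 : w * s * w⁻¹ = γ * s * γ⁻¹ := by
        calc w * s * w⁻¹ = ((w * γ⁻¹) * (γ * s * γ⁻¹)) * (γ * w⁻¹) := by group
        _ = ((γ * s * γ⁻¹) * (w * γ⁻¹)) * (γ * w⁻¹) := by rw [h1]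
        _ = γ * s * γ⁻¹ := by group
      have hmemO : w * s * w⁻¹ ∈ Os ⟨s, hs⟩ := Set.mem_iInter.1 hwI ⟨s, hs⟩
      have hmemO' : γ * s * γ⁻¹ ∈ Os ⟨s, hs⟩ := by rw [← h2]; exact hmemO
      have hγsγ : γ * s * γ⁻¹ = s :=
        hOsiso ⟨s, hs⟩ _ hmemO' (mul_mem (mul_mem hγ (hTΓ s hs)) (inv_mem hγ))
      have hws : w * s * w⁻¹ = s := h2.trans hγsγ
      calc w * s = (w * s * w⁻¹) * w := by group
      _ = s * w := by rw [hws]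
    have hwC : w ∈ C := hCmemT w hwT
    have hwcore : w ∈ U.normalCore := by
      rw [mem_normalCore_iff]
      intro b
      obtain ⟨p, hp, δ, hδ, rfl⟩ := hdecG b
      have hcomm : w * δ = δ * w := hCcomm w hwC δ hδ
      have hδw : δ * w * δ⁻¹ = w := by rw [← hcomm]; group
      have heq : (p * δ) * w * (p * δ)⁻¹ = p * w * p⁻¹ := by
        rw [mul_inv_rev]
        calc p * δ * w * (δ⁻¹ * p⁻¹) = p * (δ * w * δ⁻¹) * p⁻¹ := by group
        _ = p * w * p⁻¹ := by rw [hδw]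
      rw [heq]
      exact hVu p hp w hwVu
    rw [hUcore] at hwcore
    exact Subgroup.mem_bot.1 hwcore
  obtain ⟨W1, hW1o, hW1m, hW1⟩ := exists_sq_subset hWo hWm
  -- the image of M in G ⧸ Γ, and an open cover argument
  set Q : Set (G ⧸ Γ) := QuotientGroup.mk '' (M : Set G) with hQ
  set F : (G ⧸ Γ) → Set (G ⧸ Γ) :=
    fun x => QuotientGroup.mk '' ((fun w => Quotient.out x * w) '' W1) with hF
  have hFo : ∀ x, IsOpen (F x) :=
    fun x => QuotientGroup.isOpenMap_coe _ ((isOpenMap_mul_left _) _ hW1o)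
  have hFcover : (Set.univ : Set (G ⧸ Γ)) ⊆ ⋃ x, F x := by
    rintro y -
    refine Set.mem_iUnion.2 ⟨y, ⟨y.out * 1, ⟨1, hW1m, rfl⟩, ?_⟩⟩
    rw [mul_one]
    exact QuotientGroup.out_eq' y
  obtain ⟨t, ht⟩ := isCompact_univ.elim_finite_subcover F hFo hFcover
  have hkey : ∀ x : G ⧸ Γ, ∀ m ∈ M, ∀ m' ∈ M,
      (QuotientGroup.mk m : G ⧸ Γ) ∈ F x → (QuotientGroup.mk m' : G ⧸ Γ) ∈ F x →
      (QuotientGroup.mk m : G ⧸ Γ) = QuotientGroup.mk m' := by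
    intro x m hm m' hm' h1 h2
    obtain ⟨-, ⟨w1, hw1, rfl⟩, he1⟩ := h1
    obtain ⟨-, ⟨w2, hw2, rfl⟩, he2⟩ := h2
    have hγ1 : (x.out * w1)⁻¹ * m ∈ Γ := QuotientGroup.eq.1 he1
    have hγ2 : (x.out * w2)⁻¹ * m' ∈ Γ := QuotientGroup.eq.1 he2
    have hu : m⁻¹ * m' ∈ M := mul_mem (inv_mem hm) hm'
    rw [hM, mem_prodSubgroup] at hu
    obtain ⟨cu, hcu, γu, hγu, hud⟩ := hu
    have hwW : w1⁻¹ * w2 ∈ W := hW1 w1 hw1 w2 hw2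
    have hweq : w1⁻¹ * w2 =
        ((x.out * w1)⁻¹ * m) * (m⁻¹ * m') * ((x.out * w2)⁻¹ * m')⁻¹ := by group
    have hweq2 : w1⁻¹ * w2 =
        ((((x.out * w1)⁻¹ * m) * cu) * (((x.out * w1)⁻¹ * m))⁻¹) *
          ((((x.out * w1)⁻¹ * m) * γu) * (((x.out * w2)⁻¹ * m'))⁻¹) := by
      rw [hweq, hud]; group
    have h1w : w1⁻¹ * w2 = 1 :=
      hclaim _ hwW _ (hconjC _ hγ1 cu hcu) _
        (mul_mem (mul_mem hγ1 hγu) (inv_mem hγ2)) hweq2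
    have hfin : m⁻¹ * m' ∈ Γ := by
      have h3 : ((x.out * w1)⁻¹ * m) * (m⁻¹ * m') * ((x.out * w2)⁻¹ * m')⁻¹ = 1 := by
        rw [← hweq]; exact h1w
      have hval : m⁻¹ * m' = ((x.out * w1)⁻¹ * m)⁻¹ * ((x.out * w2)⁻¹ * m') := by
        calc m⁻¹ * m'
            = ((x.out * w1)⁻¹ * m)⁻¹ *
              (((x.out * w1)⁻¹ * m) * (m⁻¹ * m') * ((x.out * w2)⁻¹ * m')⁻¹) *
              ((x.out * w2)⁻¹ * m') := by group
        _ = ((x.out * w1)⁻¹ * m)⁻¹ * 1 * ((x.out * w2)⁻¹ * m') := by rw [h3]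
        _ = ((x.out * w1)⁻¹ * m)⁻¹ * ((x.out * w2)⁻¹ * m') := by group
      rw [hval]
      exact mul_mem (inv_mem hγ1) hγ2
    exact QuotientGroup.eq.2 hfin
  -- Q is finite
  have hQfin : Q.Finite := by
    have hsel : ∀ q : G ⧸ Γ, ∃ x ∈ t, q ∈ F x :=
      fun q => by simpa using Set.mem_iUnion₂.1 (ht (Set.mem_univ q))
    choose sel hselt hselF using hsel
    have hinj2 : ∀ q1 ∈ Q, ∀ q2 ∈ Q, sel q1 = sel q2 → q1 = q2 := by
      intro q1 hq1 q2 hq2 hsame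
      obtain ⟨m, hm, rfl⟩ := hq1
      obtain ⟨m', hm', rfl⟩ := hq2
      refine hkey (sel (QuotientGroup.mk m')) m hm m' hm' ?_ (hselF _)
      rw [← hsame]
      exact hselF _
    have : Finite ↥Q := by
      refine Finite.of_injective
        (fun q : Q => (⟨sel q.1, hselt q.1⟩ : {x // x ∈ t})) ?_
      intro a b hab
      exact Subtype.ext (hinj2 a.1 a.2 b.1 b.2 (congrArg Subtype.val hab))
    exact Set.toFinite Q
  -- hence Γ has finite relative index in H'
  have hfinquot : Finite (↥H' ⧸ Γ.subgroupOf H') := by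
    haveI : Finite ↥Q := hQfin.to_subtype
    have hwd : ∀ a b : ↥H', @Setoid.r _ (QuotientGroup.leftRel (Γ.subgroupOf H')) a b →
        (⟨QuotientGroup.mk (a : G), ⟨a, hH'M a.2, rfl⟩⟩ : ↥Q) =
          ⟨QuotientGroup.mk (b : G), ⟨b, hH'M b.2, rfl⟩⟩ := by
      intro a b hab
      apply Subtype.ext
      show (QuotientGroup.mk (a : G) : G ⧸ Γ) = QuotientGroup.mk (b : G)
      have h1 : a⁻¹ * b ∈ Γ.subgroupOf H' := QuotientGroup.leftRel_apply.1 hab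
      have h2 : (a : G)⁻¹ * (b : G) ∈ Γ := h1
      exact QuotientGroup.eq.2 h2
    refine Finite.of_injective
      (fun q : ↥H' ⧸ Γ.subgroupOf H' => Quotient.liftOn' q
        (fun h : ↥H' => (⟨QuotientGroup.mk (h : G), ⟨h, hH'M h.2, rfl⟩⟩ : ↥Q)) hwd) ?_
    intro q1 q2
    refine Quotient.inductionOn₂' q1 q2 ?_
    intro a b hab
    have h3 : (QuotientGroup.mk (a : G) : G ⧸ Γ) = QuotientGroup.mk (b : G) :=
      congrArg Subtype.val hab
    have h2 : (a : G)⁻¹ * (b : G) ∈ Γ := QuotientGroup.eq.1 h3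
    apply Quotient.sound'
    rw [QuotientGroup.leftRel_apply]
    exact h2
  have hrelH' : Γ.relIndex H' ≠ 0 := by
    haveI := hfinquot
    exact Subgroup.index_ne_zero_of_finite
  -- conclude
  have h1 : (Γ ⊓ H').relIndex H' ≠ 0 := by rwa [Subgroup.inf_relIndex_right]
  have h2 : (Γ ⊓ H').relIndex H ≠ 0 := by
    rw [← Subgroup.relIndex_mul_relIndex (Γ ⊓ H') H' H inf_le_right hH'le]
    exact mul_ne_zero h1 hH'fi
  intro h0
  have hdvd := Subgroup.relIndex_dvd_of_le_left H (inf_le_left : Γ ⊓ H' ≤ Γ)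
  rw [h0] at hdvd
  exact h2 (zero_dvd_iff.1 hdvd)
end

section
/- Let L be a tdlc group with a compact open subgroup U_m such that every compact subgroup of L containing U_m equals U_m, and such that for every open normal subgroup V of U_m the normalizer of V in L equals U_m. Let K be a compact normal subgroup of L and let π : L → L/K be the quotient homomorphism. Then every element g ∈ L such that the centralizer of π(g) in L/K is open belongs to the normal core of U_m in L. Equivalently, the preimage under π of the quasi-center of L/K is contained in the normal core of U_m. -/
private lemma conj_centralizer_set {Q : Type*} [Group Q] (a c : Q) :
    ((Subgroup.centralizer {c * a * c⁻¹} : Subgroup Q) : Set Q)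
      = (fun y => c⁻¹ * y * c) ⁻¹' ((Subgroup.centralizer {a} : Subgroup Q) : Set Q) := by
  ext y
  simp only [SetLike.mem_coe, Subgroup.mem_centralizer_iff, Set.mem_preimage,
    Set.mem_singleton_iff, forall_eq]
  constructor
  · intro h
    calc a * (c⁻¹ * y * c) = c⁻¹ * (c * a * c⁻¹ * y) * c := by group
      _ = c⁻¹ * (y * (c * a * c⁻¹)) * c := by rw [h]
      _ = (c⁻¹ * y * c) * a := by group
  · intro h
    calc (c * a * c⁻¹) * y = c * (a * (c⁻¹ * y * c)) * c⁻¹ := by group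
      _ = c * ((c⁻¹ * y * c) * a) * c⁻¹ := by rw [h]
      _ = y * (c * a * c⁻¹) := by group

private lemma key17 {L : Type*} [Group L] [TopologicalSpace L] [IsTopologicalGroup L]
    (Um : Subgroup L) (hUmcompact : IsCompact (Um : Set L)) (hUmopen : IsOpen (Um : Set L))
    (hmax : ∀ K : Subgroup L, IsCompact (K : Set L) → Um ≤ K → K = Um)
    (hnorm : ∀ V : Subgroup L, V ≤ Um → IsOpen (V : Set L) →
      (∀ u ∈ Um, ∀ v ∈ V, u * v * u⁻¹ ∈ V) → Subgroup.normalizer (V : Set L) = Um)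
    (K : Subgroup L) [K.Normal] (hKcompact : IsCompact (K : Set L))
    (g : L)
    (hg : IsOpen ((Subgroup.centralizer {(QuotientGroup.mk g : L ⧸ K)} :
      Subgroup (L ⧸ K)) : Set (L ⧸ K))) :
    g ∈ Um := by
  -- Step 1 : K ≤ Um
  have hsupc : IsCompact ((Um ⊔ K : Subgroup L) : Set L) := by
    rw [Subgroup.mul_normal]
    exact hUmcompact.mul hKcompact
  have hKUm : K ≤ Um := le_sup_right.trans (hmax (Um ⊔ K) hsupc le_sup_left).le
  -- Step 2 : open subgroup O
  set O : Subgroup L :=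
    (Subgroup.centralizer {(QuotientGroup.mk g : L ⧸ K)}).comap (QuotientGroup.mk' K) with hO
  have hOopen : IsOpen (O : Set L) := hg.preimage QuotientGroup.continuous_mk
  have hmemO : ∀ x : L, x ∈ O ↔
      (QuotientGroup.mk g : L ⧸ K) * QuotientGroup.mk x
        = QuotientGroup.mk x * QuotientGroup.mk g := by
    intro x
    rw [hO, Subgroup.mem_comap, Subgroup.mem_centralizer_iff]
    simp [QuotientGroup.mk'_apply]
  -- Step 3 : open normal subgroup of Um inside O
  haveI : CompactSpace ↥Um := isCompact_iff_compactSpace.mp hUmcompact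
  have hWclopen : IsClopen ((O.comap Um.subtype : Subgroup ↥Um) : Set ↥Um) := by
    have hopen : IsOpen ((O.comap Um.subtype : Subgroup ↥Um) : Set ↥Um) :=
      hOopen.preimage continuous_subtype_val
    exact ⟨Subgroup.isClosed_of_isOpen _ hopen, hopen⟩
  obtain ⟨H, hH⟩ := IsTopologicalGroup.exist_openNormalSubgroup_sub_clopen_nhds_of_one hWclopen
    (Subgroup.one_mem _)
  set V : Subgroup L := H.toSubgroup.map Um.subtype with hV
  have hVle : V ≤ Um := Subgroup.map_subtype_le _
  have hVO : V ≤ O := by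
    rintro x ⟨u, hu, rfl⟩
    exact hH hu
  have hVopen : IsOpen (V : Set L) := by
    have : (V : Set L) = (Subtype.val : ↥(Um : Set L) → L) '' (H : Set ↥Um) := by
      rw [hV, Subgroup.coe_map]
      rfl
    rw [this]
    exact hUmopen.isOpenMap_subtype_val _ H.isOpen'
  have hVnormal : ∀ u ∈ Um, ∀ v ∈ V, u * v * u⁻¹ ∈ V := by
    rintro u hu v ⟨w, hw, rfl⟩
    exact ⟨⟨u, hu⟩ * w * ⟨u, hu⟩⁻¹, H.isNormal'.conj_mem w hw ⟨u, hu⟩, rfl⟩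
  -- Step 4 : N = V ⊔ K
  set N : Subgroup L := V ⊔ K with hN
  have hNle : N ≤ Um := sup_le hVle hKUm
  have hNopen : IsOpen (N : Set L) := Subgroup.isOpen_mono le_sup_left hVopen
  have hVN : V ≤ N := le_sup_left
  have hKN : K ≤ N := le_sup_right
  -- generic conjugation step
  have hstep : ∀ x : L, (∀ v ∈ V, x * v * x⁻¹ ∈ N) → ∀ n ∈ N, x * n * x⁻¹ ∈ N := by
    intro x hx n hn
    have hmap : N.map (MulAut.conj x).toMonoidHom ≤ N := by
      rw [hN, Subgroup.map_sup]
      refine sup_le ?_ ?_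
      · rintro _ ⟨v, hv, rfl⟩
        exact hx v hv
      · rintro _ ⟨k, hk, rfl⟩
        exact hKN ((‹K.Normal›).conj_mem k hk x)
    exact hmap ⟨n, hn, rfl⟩
  have hNnormal : ∀ u ∈ Um, ∀ n ∈ N, u * n * u⁻¹ ∈ N := fun u hu =>
    hstep u (fun v hv => hVN (hVnormal u hu v hv))
  have hnormN : Subgroup.normalizer (N : Set L) = Um := hnorm N hNle hNopen hNnormal
  -- Step 5 : g normalizes N
  have hcomm : ∀ v ∈ V, ∀ x : L, (QuotientGroup.mk g : L ⧸ K) * QuotientGroup.mk v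
        = QuotientGroup.mk v * QuotientGroup.mk g → x * v * x⁻¹ * v⁻¹ ∈ K →
      x * v * x⁻¹ ∈ N := by
    intro v hv x _ hk
    have : x * v * x⁻¹ = (x * v * x⁻¹ * v⁻¹) * v := by group
    rw [this]
    exact N.mul_mem (hKN hk) (hVN hv)
  have hgside : ∀ v ∈ V, g * v * g⁻¹ ∈ N := by
    intro v hv
    have hc := (hmemO v).mp (hVO hv)
    refine hcomm v hv g hc ?_
    rw [← QuotientGroup.eq_one_iff]
    calc (QuotientGroup.mk (g * v * g⁻¹ * v⁻¹) : L ⧸ K)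
        = QuotientGroup.mk g * QuotientGroup.mk v * (QuotientGroup.mk g)⁻¹ *
            (QuotientGroup.mk v)⁻¹ := by simp [mul_assoc]
      _ = 1 := by rw [hc]; group
  have hginvside : ∀ v ∈ V, g⁻¹ * v * g⁻¹⁻¹ ∈ N := by
    intro v hv
    have hc := (hmemO v).mp (hVO hv)
    refine hcomm v hv g⁻¹ hc ?_
    rw [← QuotientGroup.eq_one_iff]
    have hc' : (QuotientGroup.mk v : L ⧸ K) * QuotientGroup.mk g
        = QuotientGroup.mk g * QuotientGroup.mk v := hc.symm
    calc (QuotientGroup.mk (g⁻¹ * v * g⁻¹⁻¹ * v⁻¹) : L ⧸ K)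
        = (QuotientGroup.mk g)⁻¹ * QuotientGroup.mk v * QuotientGroup.mk g *
            (QuotientGroup.mk v)⁻¹ := by simp [mul_assoc]
      _ = (QuotientGroup.mk g)⁻¹ * (QuotientGroup.mk v * QuotientGroup.mk g) *
            (QuotientGroup.mk v)⁻¹ := by group
      _ = 1 := by rw [hc']; group
  have hgmem : g ∈ Subgroup.normalizer (N : Set L) := by
    rw [Subgroup.mem_normalizer_iff]
    intro h
    constructor
    · intro hh
      exact hstep g hgside h hh
    · intro hh
      have := hstep g⁻¹ hginvside (g * h * g⁻¹) hh
      simpa [mul_assoc] using this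
  rw [hnormN] at hgmem
  exact hgmem

theorem stmt17 {L : Type*} [Group L] [TopologicalSpace L] [IsTopologicalGroup L]
    [T2Space L] [LocallyCompactSpace L] [TotallyDisconnectedSpace L]
    (Um : Subgroup L) (hUmcompact : IsCompact (Um : Set L)) (hUmopen : IsOpen (Um : Set L))
    (hmax : ∀ K : Subgroup L, IsCompact (K : Set L) → Um ≤ K → K = Um)
    (hnorm : ∀ V : Subgroup L, V ≤ Um → IsOpen (V : Set L) →
      (∀ u ∈ Um, ∀ v ∈ V, u * v * u⁻¹ ∈ V) → Subgroup.normalizer (V : Set L) = Um)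
    (K : Subgroup L) [K.Normal] (hKcompact : IsCompact (K : Set L))
    (g : L)
    (hg : IsOpen ((Subgroup.centralizer {(QuotientGroup.mk g : L ⧸ K)} :
      Subgroup (L ⧸ K)) : Set (L ⧸ K))) :
    g ∈ Um.normalCore := by
  show ∀ b : L, b * g * b⁻¹ ∈ Um
  intro b
  refine key17 Um hUmcompact hUmopen hmax hnorm K hKcompact (b * g * b⁻¹) ?_
  have hmk : (QuotientGroup.mk (b * g * b⁻¹) : L ⧸ K)
      = QuotientGroup.mk b * QuotientGroup.mk g * (QuotientGroup.mk b : L ⧸ K)⁻¹ := by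
    simp [mul_assoc]
  rw [hmk, conj_centralizer_set]
  exact hg.preimage (((continuous_mul_left _).mul continuous_const))
end

section
/- Let L be a tdlc group with a compact open subgroup U_m such that every compact subgroup of L containing U_m equals U_m. Then every closed normal subgroup N of L that is locally elliptic (every compact subset of N is contained in a compact subgroup) is contained in U_m. In particular the locally elliptic radical of L is contained in U_m. -/
open Pointwise


/-- A subgroup `N` of a topological group `L` is locally elliptic: every compact subset of `N`
is contained in a compact subgroup of `N`. -/
def IsLocallyElliptic {L : Type*} [Group L] [TopologicalSpace L] (N : Subgroup L) : Prop :=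
  ∀ S : Set L, S ⊆ (N : Set L) → IsCompact S →
    ∃ K : Subgroup L, K ≤ N ∧ IsCompact (K : Set L) ∧ S ⊆ (K : Set L)

theorem stmt18 {L : Type*} [Group L] [TopologicalSpace L] [IsTopologicalGroup L]
    [T2Space L] [LocallyCompactSpace L] [TotallyDisconnectedSpace L]
    (Um : Subgroup L) (hUmcompact : IsCompact (Um : Set L)) (hUmopen : IsOpen (Um : Set L))
    (hmax : ∀ K : Subgroup L, IsCompact (K : Set L) → Um ≤ K → K = Um)
    (N : Subgroup L) (hNclosed : IsClosed (N : Set L)) (hNnormal : N.Normal)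
    (hNle : IsLocallyElliptic N) :
    N ≤ Um := by
  intro n hn
  -- set of Um-conjugates of n
  set S : Set L := (fun u => u * n * u⁻¹) '' (Um : Set L) with hS
  have hScompact : IsCompact S :=
    hUmcompact.image (by continuity)
  have hSsubN : S ⊆ (N : Set L) := by
    rintro _ ⟨u, _, rfl⟩
    exact hNnormal.conj_mem n hn u
  obtain ⟨K, hKN, hKcompact, hSK⟩ := hNle S hSsubN hScompact
  set M : Subgroup L := Subgroup.closure S with hM
  have hMK : M ≤ K := (Subgroup.closure_le K).2 hSK
  set Mc : Subgroup L := M.topologicalClosure with hMc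
  have hMcK : (Mc : Set L) ⊆ (K : Set L) :=
    closure_minimal hMK hKcompact.isClosed
  have hMcCompact : IsCompact (Mc : Set L) :=
    hKcompact.of_isClosed_subset isClosed_closure hMcK
  -- Um normalizes M
  have hnormM : ∀ u ∈ Um, ∀ m ∈ M, u * m * u⁻¹ ∈ M := by
    intro u hu m hm
    have : M.map (MulAut.conj u).toMonoidHom ≤ M := by
      rw [hM, MonoidHom.map_closure]
      apply Subgroup.closure_mono
      rintro _ ⟨_, ⟨v, hv, rfl⟩, rfl⟩
      refine ⟨u * v, mul_mem hu hv, ?_⟩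
      simp [MulAut.conj, mul_assoc]
    exact this ⟨m, hm, rfl⟩
  -- Um normalizes the closure Mc
  have hnormMc : ∀ u ∈ Um, ∀ m ∈ Mc, u * m * u⁻¹ ∈ Mc := by
    intro u hu m hm
    have hmt : Set.MapsTo (fun x => u * x * u⁻¹) (M : Set L) (Mc : Set L) := by
      intro x hx
      exact subset_closure (hnormM u hu x hx)
    have := hmt.closure (by continuity)
    have h2 : (fun x => u * x * u⁻¹) m ∈ closure (Mc : Set L) := this hm
    rwa [(Subgroup.isClosed_topologicalClosure M).closure_eq] at h2
  -- the product Um * Mc is a compact subgroup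
  set H : Subgroup L :=
    { carrier := (Um : Set L) * (Mc : Set L)
      one_mem' := ⟨1, one_mem Um, 1, one_mem Mc, by simp⟩
      mul_mem' := by
        rintro _ _ ⟨u, hu, m, hm, rfl⟩ ⟨v, hv, m', hm', rfl⟩
        have h1 : v⁻¹ * m * v ∈ Mc := by
          simpa using hnormMc v⁻¹ (inv_mem hv) m hm
        exact ⟨u * v, mul_mem hu hv, (v⁻¹ * m * v) * m', mul_mem h1 hm', by group⟩
      inv_mem' := by
        rintro _ ⟨u, hu, m, hm, rfl⟩
        refine ⟨u⁻¹, inv_mem hu, u * m⁻¹ * u⁻¹, hnormMc u hu m⁻¹ (inv_mem hm), ?_⟩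
        group } with hH
  have hHcompact : IsCompact (H : Set L) := by
    show IsCompact ((Um : Set L) * (Mc : Set L))
    exact hUmcompact.mul hMcCompact
  have hUmH : Um ≤ H := fun u hu => ⟨u, hu, 1, one_mem Mc, by simp⟩
  have hHUm : H = Um := hmax H hHcompact hUmH
  have hnM : n ∈ M := Subgroup.subset_closure ⟨1, one_mem Um, by simp⟩
  have hnH : n ∈ H := ⟨1, one_mem Um, n, (M.le_topologicalClosure hnM), by simp⟩
  rwa [hHUm] at hnH
end
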